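/- Let ψ : V → {1,2,3} be a map that is not a three-coloring of G (i.e., there is an edge {u,v} ∈ E with ψ(u) = ψ(v)), let 𝒱 = {(v, ψ(v)) : v ∈ V}, and let S be the submatrix of M(G) with columns indexed by 𝒱. Then for every matrix A with rows indexed by 𝒱 and columns indexed by (V × {1,2,3}) ⊔ E one has ‖M(G) − SA‖² ≥ m t² + 4 n (t³/(1 + n t⁶))² + (m + 2) (t⁵/(1 + n t⁶))². -/

import Mathlib

open Matrix

/-- The Frobenius norm of a real matrix: the square root of the sum of squares of entries. -/
noncomputable def frob {α β : Type*} [Fintype α] [Fintype β] (X : Matrix α β ℝ) : ℝ :=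
  Real.sqrt (∑ i, ∑ j, X i j ^ 2)

/-- The matrix `M(G)` of the reduction: rows indexed by `V ⊕ {1,2,3} ⊕ {ε}`,
columns indexed by `(V × {1,2,3}) ⊕ E`. -/
def MG {V : Type*} [Fintype V] [DecidableEq V] (G : SimpleGraph V) [DecidableRel G.Adj]
    (t : ℝ) : Matrix (V ⊕ Fin 3 ⊕ Unit) ((V × Fin 3) ⊕ G.edgeSet) ℝ :=
  fun r c =>
    match r, c with
    | Sum.inl u, Sum.inl (v, _) => if u = v then (1 : ℝ) else 0
    | Sum.inl u, Sum.inr e => if u ∈ (e : Sym2 V) then t ^ 2 else 0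
    | Sum.inr (Sum.inl i), Sum.inl (_, j) => if i = j then t ^ 3 else 0
    | Sum.inr (Sum.inl _), Sum.inr _ => t ^ 5
    | Sum.inr (Sum.inr _), Sum.inl _ => 0
    | Sum.inr (Sum.inr _), Sum.inr _ => t

section helpers

variable {V : Type*} [Fintype V] [DecidableEq V]

/-- Test vectors orthogonal to the selected columns. -/
def zvec (ψ : V → Fin 3) (t : ℝ) (i : Fin 3) : V ⊕ Fin 3 ⊕ Unit → ℝ
  | Sum.inl w => if ψ w = i then -t ^ 3 else 0
  | Sum.inr (Sum.inl j) => if j = i then 1 else 0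
  | Sum.inr (Sum.inr _) => 0

@[simp] lemma zvec_inl (ψ : V → Fin 3) (t : ℝ) (i : Fin 3) (w : V) :
    zvec ψ t i (Sum.inl w) = if ψ w = i then -t ^ 3 else 0 := rfl

@[simp] lemma zvec_color (ψ : V → Fin 3) (t : ℝ) (i j : Fin 3) :
    zvec ψ t i (Sum.inr (Sum.inl j)) = if j = i then 1 else 0 := rfl

@[simp] lemma zvec_eps (ψ : V → Fin 3) (t : ℝ) (i : Fin 3) (u : Unit) :
    zvec ψ t i (Sum.inr (Sum.inr u)) = 0 := rfl

variable (G : SimpleGraph V) [DecidableRel G.Adj]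

@[simp] lemma MG_vv (t : ℝ) (u v : V) (i : Fin 3) :
    MG G t (Sum.inl u) (Sum.inl (v, i)) = if u = v then (1 : ℝ) else 0 := rfl

@[simp] lemma MG_ve (t : ℝ) (u : V) (e : G.edgeSet) :
    MG G t (Sum.inl u) (Sum.inr e) = if u ∈ (e : Sym2 V) then t ^ 2 else 0 := rfl

@[simp] lemma MG_cv (t : ℝ) (i : Fin 3) (v : V) (j : Fin 3) :
    MG G t (Sum.inr (Sum.inl i)) (Sum.inl (v, j)) = if i = j then t ^ 3 else 0 := rfl

@[simp] lemma MG_ce (t : ℝ) (i : Fin 3) (e : G.edgeSet) :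
    MG G t (Sum.inr (Sum.inl i)) (Sum.inr e) = t ^ 5 := rfl

@[simp] lemma MG_ev (t : ℝ) (u : Unit) (v : V) (j : Fin 3) :
    MG G t (Sum.inr (Sum.inr u)) (Sum.inl (v, j)) = 0 := rfl

@[simp] lemma MG_ee (t : ℝ) (u : Unit) (e : G.edgeSet) :
    MG G t (Sum.inr (Sum.inr u)) (Sum.inr e) = t := rfl

/-- The key elementary inequality behind the grouped Cauchy-Schwarz step. -/
lemma keyCS (N Q a s u : ℝ) (hN : 0 ≤ N) (hQ : 0 ≤ Q) (h : s ^ 2 ≤ N * Q) :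
    (a - u * s) ^ 2 ≤ (1 + N * u ^ 2) * (a ^ 2 + Q) := by
  rcases eq_or_lt_of_le hN with hN0 | hN0
  · have hs : s = 0 := by nlinarith [sq_nonneg s]
    have hN' : N = 0 := hN0.symm
    subst hs hN'
    nlinarith [sq_nonneg a, sq_nonneg u]
  · nlinarith [sq_nonneg (N * u * a + s),
      mul_nonneg (sub_nonneg.2 h) (by positivity : (0:ℝ) ≤ 1 + N * u ^ 2)]

/-- z-vectors are orthogonal to the selected columns of `MG`. -/
lemma dotS (ψ : V → Fin 3) (t : ℝ) (v : V) (i : Fin 3) :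
    ∑ row, MG G t row (Sum.inl (v, ψ v)) * zvec ψ t i row = 0 := by
  rw [Fintype.sum_sum_type, Fintype.sum_sum_type]
  have h1 : ∑ u : V, MG G t (Sum.inl u) (Sum.inl (v, ψ v)) * zvec ψ t i (Sum.inl u)
      = if ψ v = i then -t ^ 3 else 0 := by
    rw [Finset.sum_eq_single v]
    · simp
    · intro u _ hu; simp [hu]
    · simp
  have h2 : ∑ j : Fin 3, MG G t (Sum.inr (Sum.inl j)) (Sum.inl (v, ψ v))
      * zvec ψ t i (Sum.inr (Sum.inl j)) = if ψ v = i then t ^ 3 else 0 := by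
    rw [Finset.sum_eq_single i]
    · by_cases h : ψ v = i
      · simp [h]
      · simp [h, show ¬ i = ψ v from fun hh => h hh.symm]
    · intro j _ hj; simp [hj]
    · simp
  rw [h1, h2]
  by_cases h : ψ v = i <;> simp [h]

/-- Per-column grouped Cauchy–Schwarz bound. -/
lemma colCS (ψ : V → Fin 3) (t : ℝ) (n : ℕ) (hn : Fintype.card V ≤ n)
    (x : V ⊕ Fin 3 ⊕ Unit → ℝ) :
    (∑ i : Fin 3, (∑ row, x row * zvec ψ t i row) ^ 2) / (1 + n * t ^ 6)
      + x (Sum.inr (Sum.inr ())) ^ 2 ≤ ∑ row, x row ^ 2 := by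
  have hK0 : (0:ℝ) < 1 + n * t ^ 6 := by positivity
  have hper : ∀ i : Fin 3,
      (∑ row, x row * zvec ψ t i row) ^ 2 / (1 + n * t ^ 6)
        ≤ x (Sum.inr (Sum.inl i)) ^ 2
          + ∑ v ∈ Finset.univ.filter (fun v => ψ v = i), x (Sum.inl v) ^ 2 := by
    intro i
    set F := Finset.univ.filter (fun v => ψ v = i) with hF
    set a := x (Sum.inr (Sum.inl i)) with ha
    set Q := ∑ v ∈ F, x (Sum.inl v) ^ 2 with hQdef
    set Sg := ∑ v ∈ F, x (Sum.inl v) with hSg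
    have hQ0 : 0 ≤ Q := Finset.sum_nonneg fun _ _ => sq_nonneg _
    have hD : ∑ row, x row * zvec ψ t i row = a - t ^ 3 * Sg := by
      rw [Fintype.sum_sum_type, Fintype.sum_sum_type]
      have h1 : ∑ v : V, x (Sum.inl v) * zvec ψ t i (Sum.inl v)
          = -t ^ 3 * Sg := by
        rw [hSg, Finset.mul_sum, hF, Finset.sum_filter]
        apply Finset.sum_congr rfl
        intro v _
        by_cases h : ψ v = i <;> simp [h] <;> ring
      have h2 : ∑ j : Fin 3, x (Sum.inr (Sum.inl j)) * zvec ψ t i (Sum.inr (Sum.inl j)) = a := by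
        rw [Finset.sum_eq_single i]
        · simp [ha]
        · intro j _ hj; simp [hj]
        · simp
      rw [h1, h2]
      simp
      ring
    have hcs : Sg ^ 2 ≤ (F.card : ℝ) * Q := by
      have := sq_sum_le_card_mul_sum_sq (s := F) (f := fun v => x (Sum.inl v))
      exact_mod_cast this
    have hkey := keyCS (F.card : ℝ) Q a Sg (t ^ 3) (by positivity) hQ0 hcs
    rw [hD, div_le_iff₀ hK0]
    calc (a - t ^ 3 * Sg) ^ 2 ≤ (1 + (F.card : ℝ) * (t ^ 3) ^ 2) * (a ^ 2 + Q) := hkey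
      _ ≤ (1 + n * t ^ 6) * (a ^ 2 + Q) := by
          apply mul_le_mul_of_nonneg_right _ (by positivity)
          have hcard : (F.card : ℝ) ≤ n := by
            exact_mod_cast le_trans (Finset.card_filter_le _ _)
              (by simpa using hn)
          nlinarith [sq_nonneg (t^3), sq_nonneg t]
      _ = (a ^ 2 + Q) * (1 + n * t ^ 6) := by ring
  calc (∑ i : Fin 3, (∑ row, x row * zvec ψ t i row) ^ 2) / (1 + n * t ^ 6)
        + x (Sum.inr (Sum.inr ())) ^ 2
      = (∑ i : Fin 3, (∑ row, x row * zvec ψ t i row) ^ 2 / (1 + n * t ^ 6))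
        + x (Sum.inr (Sum.inr ())) ^ 2 := by rw [Finset.sum_div]
    _ ≤ (∑ i : Fin 3, (x (Sum.inr (Sum.inl i)) ^ 2
          + ∑ v ∈ Finset.univ.filter (fun v => ψ v = i), x (Sum.inl v) ^ 2))
        + x (Sum.inr (Sum.inr ())) ^ 2 := by
          exact add_le_add_left (Finset.sum_le_sum fun i _ => hper i) _
    _ = ∑ row, x row ^ 2 := by
        rw [Fintype.sum_sum_type, Fintype.sum_sum_type, Finset.sum_add_distrib,
          Finset.sum_fiberwise Finset.univ ψ (fun v => x (Sum.inl v) ^ 2)]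
        simp
        ring


lemma Dvert (ψ : V → Fin 3) (t : ℝ) (v : V) (j i : Fin 3) :
    ∑ row, MG G t row (Sum.inl (v, j)) * zvec ψ t i row
      = (if ψ v = i then -t ^ 3 else 0) + (if j = i then t ^ 3 else 0) := by
  rw [Fintype.sum_sum_type, Fintype.sum_sum_type]
  have h1 : ∑ u : V, MG G t (Sum.inl u) (Sum.inl (v, j)) * zvec ψ t i (Sum.inl u)
      = if ψ v = i then -t ^ 3 else 0 := by
    rw [Finset.sum_eq_single v]
    · simp
    · intro u _ hu; simp [hu]
    · simp
  have h2 : ∑ j' : Fin 3, MG G t (Sum.inr (Sum.inl j')) (Sum.inl (v, j))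
      * zvec ψ t i (Sum.inr (Sum.inl j')) = if j = i then t ^ 3 else 0 := by
    rw [Finset.sum_eq_single i]
    · by_cases h : i = j
      · simp [h]
      · simp [h, show ¬ j = i from fun hh => h hh.symm]
    · intro j' _ hj; simp [hj]
    · simp
  rw [h1, h2]
  simp

lemma Dedge (ψ : V → Fin 3) (t : ℝ) (e : G.edgeSet) (u w : V) (huw : u ≠ w)
    (he : (e : Sym2 V) = s(u, w)) (i : Fin 3) :
    ∑ row, MG G t row (Sum.inr e) * zvec ψ t i row
      = t ^ 5 + ((if ψ u = i then -t ^ 5 else 0) + (if ψ w = i then -t ^ 5 else 0)) := by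
  rw [Fintype.sum_sum_type, Fintype.sum_sum_type]
  have h1 : ∑ v : V, MG G t (Sum.inl v) (Sum.inr e) * zvec ψ t i (Sum.inl v)
      = (if ψ u = i then -t ^ 5 else 0) + (if ψ w = i then -t ^ 5 else 0) := by
    have hterm : ∀ v : V, MG G t (Sum.inl v) (Sum.inr e) * zvec ψ t i (Sum.inl v)
        = (if v = u then (if ψ u = i then -t ^ 5 else 0) else 0)
          + (if v = w then (if ψ w = i then -t ^ 5 else 0) else 0) := by
      intro v
      rw [MG_ve, zvec_inl]
      simp only [he, Sym2.mem_iff]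
      by_cases h1 : v = u
      · subst h1
        simp [huw]
        by_cases h : ψ v = i <;> simp [h] <;> ring
      · by_cases h2 : v = w
        · subst h2
          simp [h1]
          by_cases h : ψ v = i <;> simp [h] <;> ring
        · simp [h1, h2]
    rw [Finset.sum_congr rfl fun v _ => hterm v, Finset.sum_add_distrib,
      Finset.sum_ite_eq' Finset.univ u, Finset.sum_ite_eq' Finset.univ w]
    simp
  have h2 : ∑ j : Fin 3, MG G t (Sum.inr (Sum.inl j)) (Sum.inr e)
      * zvec ψ t i (Sum.inr (Sum.inl j)) = t ^ 5 := by
    rw [Finset.sum_eq_single i]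
    · simp
    · intro j _ hj; simp [hj]
    · simp
  rw [h1, h2]
  simp
  ring

lemma edge_sq_bound (ψ : V → Fin 3) (t : ℝ) (e : G.edgeSet) :
    t ^ 10 ≤ ∑ i : Fin 3, (∑ row, MG G t row (Sum.inr e) * zvec ψ t i row) ^ 2 := by
  obtain ⟨u, w, he⟩ : ∃ u w : V, (e : Sym2 V) = s(u, w) := by
    obtain ⟨e, heG⟩ := e
    induction e using Sym2.ind with
    | _ u w => exact ⟨u, w, rfl⟩
  have huw : u ≠ w := by
    have := e.2
    rw [he] at this
    exact (G.mem_edgeSet.1 this).ne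
  rw [Finset.sum_congr rfl fun i _ => by rw [Dedge G ψ t e u w huw he]]
  obtain ⟨a, ha⟩ : ∃ a, ψ u = a := ⟨_, rfl⟩
  obtain ⟨b, hb⟩ : ∃ b, ψ w = b := ⟨_, rfl⟩
  simp only [ha, hb]
  fin_cases a <;> fin_cases b <;>
    simp [Fin.sum_univ_three] <;> nlinarith [sq_nonneg (t ^ 5), sq_nonneg t]

lemma edge_sq_bound_mono (ψ : V → Fin 3) (t : ℝ) (e : G.edgeSet) (u0 w0 : V)
    (h0 : ψ u0 = ψ w0) (he0 : (e : Sym2 V) = s(u0, w0)) :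
    3 * t ^ 10 ≤ ∑ i : Fin 3, (∑ row, MG G t row (Sum.inr e) * zvec ψ t i row) ^ 2 := by
  have huw : u0 ≠ w0 := by
    have := e.2
    rw [he0] at this
    exact (G.mem_edgeSet.1 this).ne
  rw [Finset.sum_congr rfl fun i _ => by rw [Dedge G ψ t e u0 w0 huw he0]]
  obtain ⟨b, hb⟩ : ∃ b, ψ w0 = b := ⟨_, rfl⟩
  simp only [h0, hb]
  fin_cases b <;>
    simp [Fin.sum_univ_three] <;> nlinarith [sq_nonneg (t ^ 5), sq_nonneg t]

lemma vert_sq_sum (t : ℝ) (a : Fin 3) :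
    ∑ j : Fin 3, ∑ i : Fin 3,
      ((if a = i then -t ^ 3 else 0) + (if j = i then t ^ 3 else 0)) ^ 2 = 4 * t ^ 6 := by
  fin_cases a <;> simp [Fin.sum_univ_three] <;> ring

lemma res_dot (ψ : V → Fin 3) (t : ℝ) (S : Matrix (V ⊕ Fin 3 ⊕ Unit) V ℝ)
    (hS : S = Matrix.of fun r (v : V) => MG G t r (Sum.inl (v, ψ v)))
    (A : Matrix V ((V × Fin 3) ⊕ G.edgeSet) ℝ) (c : (V × Fin 3) ⊕ G.edgeSet) (i : Fin 3) :
    ∑ row, (MG G t - S * A) row c * zvec ψ t i row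
      = ∑ row, MG G t row c * zvec ψ t i row := by
  have hz : ∀ v : V, ∑ row, S row v * zvec ψ t i row = 0 := by
    intro v
    subst hS
    simpa using dotS G ψ t v i
  simp only [Matrix.sub_apply, Matrix.mul_apply, sub_mul, Finset.sum_sub_distrib]
  have : ∑ row, (∑ v, S row v * A v c) * zvec ψ t i row = 0 := by
    calc ∑ row, (∑ v, S row v * A v c) * zvec ψ t i row
        = ∑ row, ∑ v, A v c * (S row v * zvec ψ t i row) := by
          apply Finset.sum_congr rfl
          intro row _
          rw [Finset.sum_mul]
          apply Finset.sum_congr rfl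
          intro v _
          ring
      _ = ∑ v, A v c * ∑ row, S row v * zvec ψ t i row := by
          rw [Finset.sum_comm]
          simp_rw [Finset.mul_sum]
      _ = 0 := by simp [hz]
  rw [this, sub_zero]

lemma res_eps (ψ : V → Fin 3) (t : ℝ) (S : Matrix (V ⊕ Fin 3 ⊕ Unit) V ℝ)
    (hS : S = Matrix.of fun r (v : V) => MG G t r (Sum.inl (v, ψ v)))
    (A : Matrix V ((V × Fin 3) ⊕ G.edgeSet) ℝ) (c : (V × Fin 3) ⊕ G.edgeSet) :
    (MG G t - S * A) (Sum.inr (Sum.inr ())) c = MG G t (Sum.inr (Sum.inr ())) c := by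
  subst hS
  simp [Matrix.sub_apply, Matrix.mul_apply]

end helpers

/-- If `ψ : V → {1,2,3}` is not a three-coloring of `G` and `S` is the submatrix of `M(G)`
with columns indexed by `𝒱 = {(v, ψ(v)) : v ∈ V}`, then for every matrix `A` one has
`‖M(G) - S A‖² ≥ m t² + 4 n (t³/(1+n t⁶))² + (m+2) (t⁵/(1+n t⁶))²`. -/
theorem non_coloring_squared_lower_bound
    {V : Type*} [Fintype V] [DecidableEq V] (G : SimpleGraph V) [DecidableRel G.Adj]
    (n m : ℕ) (hn : n = Fintype.card V) (hm : m = G.edgeFinset.card)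
    (hn1 : 1 ≤ n) (hm1 : 1 ≤ m)
    (t : ℝ) (ht : t = 1 / (4 * (m + n) ^ 3))
    (ψ : V → Fin 3) (hψ : ∃ u v : V, G.Adj u v ∧ ψ u = ψ v)
    (S : Matrix (V ⊕ Fin 3 ⊕ Unit) V ℝ)
    (hS : S = Matrix.of fun r (v : V) => MG G t r (Sum.inl (v, ψ v)))
    (A : Matrix V ((V × Fin 3) ⊕ G.edgeSet) ℝ) :
    frob (MG G t - S * A) ^ 2 ≥
      m * t ^ 2 + 4 * n * (t ^ 3 / (1 + n * t ^ 6)) ^ 2 +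
        (m + 2) * (t ^ 5 / (1 + n * t ^ 6)) ^ 2 := by
  obtain ⟨u0, v0, hadj, hcol0⟩ := hψ
  have hm0 : (1:ℝ) ≤ (m:ℝ) := by exact_mod_cast hm1
  have hn0 : (1:ℝ) ≤ (n:ℝ) := by exact_mod_cast hn1
  have ht0 : 0 < t := by
    rw [ht]
    apply div_pos one_pos
    have hmn : (0:ℝ) < (m:ℝ) + n := by linarith
    positivity
  set K : ℝ := 1 + (n:ℝ) * t ^ 6 with hKdef
  have hK1 : 1 ≤ K := by
    have : 0 ≤ (n:ℝ) * t ^ 6 := by positivity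
    linarith
  have hK0 : (0:ℝ) < K := by linarith
  have hmcard : Fintype.card G.edgeSet = m := by
    rw [hm, SimpleGraph.edgeFinset_card]
  set e0 : G.edgeSet := ⟨s(u0, v0), G.mem_edgeSet.2 hadj⟩ with he0def
  rw [ge_iff_le]
  have hfrob : frob (MG G t - S * A) ^ 2
      = ∑ c, ∑ row, (MG G t - S * A) row c ^ 2 := by
    rw [frob]
    exact (Real.sq_sqrt (Finset.sum_nonneg fun _ _ =>
      Finset.sum_nonneg fun _ _ => sq_nonneg _)).trans Finset.sum_comm
  rw [hfrob]
  have hcol : ∀ c, (∑ i : Fin 3, (∑ row, MG G t row c * zvec ψ t i row) ^ 2) / K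
      + MG G t (Sum.inr (Sum.inr ())) c ^ 2 ≤ ∑ row, (MG G t - S * A) row c ^ 2 := by
    intro c
    have h := colCS ψ t n hn.ge (fun row => (MG G t - S * A) row c)
    have hd : ∀ i : Fin 3, ∑ row, (MG G t - S * A) row c * zvec ψ t i row
        = ∑ row, MG G t row c * zvec ψ t i row := fun i => res_dot G ψ t S hS A c i
    simp only [hd, res_eps G ψ t S hS A c] at h
    exact h
  set f : G.edgeSet → ℝ :=
    fun e => ∑ i : Fin 3, (∑ row, MG G t row (Sum.inr e) * zvec ψ t i row) ^ 2 with hfdef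
  have hvert : ∑ p : V × Fin 3,
      ((∑ i : Fin 3, (∑ row, MG G t row (Sum.inl p) * zvec ψ t i row) ^ 2) / K
        + MG G t (Sum.inr (Sum.inr ())) (Sum.inl p) ^ 2)
      = (n:ℝ) * (4 * t ^ 6) / K := by
    rw [Fintype.sum_prod_type]
    have hp : ∀ v : V, ∑ j : Fin 3,
        ((∑ i : Fin 3, (∑ row, MG G t row (Sum.inl (v, j)) * zvec ψ t i row) ^ 2) / K
          + MG G t (Sum.inr (Sum.inr ())) (Sum.inl (v, j)) ^ 2)
        = 4 * t ^ 6 / K := by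
      intro v
      have hstep : ∀ j : Fin 3,
          ((∑ i : Fin 3, (∑ row, MG G t row (Sum.inl (v, j)) * zvec ψ t i row) ^ 2) / K
            + MG G t (Sum.inr (Sum.inr ())) (Sum.inl (v, j)) ^ 2)
          = (∑ i : Fin 3, ((if ψ v = i then -t ^ 3 else 0)
              + (if j = i then t ^ 3 else 0)) ^ 2) / K := by
        intro j
        rw [MG_ev]
        rw [Finset.sum_congr rfl fun i _ => by rw [Dvert G ψ t v j i]]
        ring
      rw [Finset.sum_congr rfl fun j _ => hstep j, ← Finset.sum_div, vert_sq_sum t (ψ v)]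
    rw [Finset.sum_congr rfl fun v _ => hp v, Finset.sum_const, Finset.card_univ, ← hn,
      nsmul_eq_mul]
    ring
  have hedge : ((m:ℝ) + 2) * t ^ 10 / K + m * t ^ 2
      ≤ ∑ e : G.edgeSet,
        ((∑ i : Fin 3, (∑ row, MG G t row (Sum.inr e) * zvec ψ t i row) ^ 2) / K
          + MG G t (Sum.inr (Sum.inr ())) (Sum.inr e) ^ 2) := by
    have hsplit : ∑ e : G.edgeSet,
        ((∑ i : Fin 3, (∑ row, MG G t row (Sum.inr e) * zvec ψ t i row) ^ 2) / K
          + MG G t (Sum.inr (Sum.inr ())) (Sum.inr e) ^ 2)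
        = (∑ e : G.edgeSet, f e) / K + m * t ^ 2 := by
      rw [Finset.sum_add_distrib, ← Finset.sum_div]
      congr 1
      simp only [MG_ee]
      rw [Finset.sum_const, Finset.card_univ, hmcard, nsmul_eq_mul]
    rw [hsplit]
    have hkey : ((m:ℝ) + 2) * t ^ 10 ≤ ∑ e : G.edgeSet, f e := by
      have hsum := Finset.add_sum_erase Finset.univ f (Finset.mem_univ e0)
      have h1 : 3 * t ^ 10 ≤ f e0 :=
        edge_sq_bound_mono G ψ t e0 u0 v0 hcol0 rfl
      have h2 : ((Finset.univ.erase e0).card : ℝ) * t ^ 10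
          ≤ ∑ e ∈ Finset.univ.erase e0, f e := by
        calc ((Finset.univ.erase e0).card : ℝ) * t ^ 10
            = ∑ _e ∈ Finset.univ.erase e0, t ^ 10 := by
              rw [Finset.sum_const, nsmul_eq_mul]
          _ ≤ ∑ e ∈ Finset.univ.erase e0, f e :=
              Finset.sum_le_sum fun e _ => edge_sq_bound G ψ t e
      have hc : ((Finset.univ.erase e0).card : ℝ) = (m:ℝ) - 1 := by
        rw [Finset.card_erase_of_mem (Finset.mem_univ e0), Finset.card_univ, hmcard,
          Nat.cast_sub hm1, Nat.cast_one]
      rw [hc] at h2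
      have ht10 : (0:ℝ) ≤ t ^ 10 := by positivity
      rw [← hsum]
      nlinarith
    have hK2 : ((m:ℝ) + 2) * t ^ 10 / K ≤ (∑ e : G.edgeSet, f e) / K := by
      gcongr
    linarith
  calc (m:ℝ) * t ^ 2 + 4 * n * (t ^ 3 / K) ^ 2 + ((m:ℝ) + 2) * (t ^ 5 / K) ^ 2
      ≤ (n:ℝ) * (4 * t ^ 6) / K + (((m:ℝ) + 2) * t ^ 10 / K + m * t ^ 2) := by
        have hKK : K ≤ K ^ 2 := by nlinarith
        have e1 : t ^ 6 / K ^ 2 ≤ t ^ 6 / K := by gcongr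
        have e2 : t ^ 10 / K ^ 2 ≤ t ^ 10 / K := by gcongr
        have h1 : 4 * (n:ℝ) * (t ^ 3 / K) ^ 2 ≤ (n:ℝ) * (4 * t ^ 6) / K := by
          have hq : (t ^ 3 / K) ^ 2 = t ^ 6 / K ^ 2 := by
            rw [div_pow, ← pow_mul]
          rw [hq]
          calc 4 * (n:ℝ) * (t ^ 6 / K ^ 2) ≤ 4 * n * (t ^ 6 / K) := by
                apply mul_le_mul_of_nonneg_left e1 (by positivity)
            _ = n * (4 * t ^ 6) / K := by ring
        have h2 : ((m:ℝ) + 2) * (t ^ 5 / K) ^ 2 ≤ ((m:ℝ) + 2) * t ^ 10 / K := by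
          have hq : (t ^ 5 / K) ^ 2 = t ^ 10 / K ^ 2 := by
            rw [div_pow, ← pow_mul]
          rw [hq]
          calc ((m:ℝ) + 2) * (t ^ 10 / K ^ 2) ≤ ((m:ℝ) + 2) * (t ^ 10 / K) := by
                apply mul_le_mul_of_nonneg_left e2 (by positivity)
            _ = ((m:ℝ) + 2) * t ^ 10 / K := by ring
        linarith
    _ ≤ ∑ c, ((∑ i : Fin 3, (∑ row, MG G t row c * zvec ψ t i row) ^ 2) / K
          + MG G t (Sum.inr (Sum.inr ())) c ^ 2) := by
        rw [Fintype.sum_sum_type, hvert]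
        exact add_le_add_right hedge _
    _ ≤ ∑ c, ∑ row, (MG G t - S * A) row c ^ 2 :=
        Finset.sum_le_sum fun c _ => hcol c
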